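/- Let C be the SSPwCT choice rule in which, when a slot selects a contract of agent i, all other contracts of agent i are removed from consideration by later slots, and let C̄ be the variant in which only the selected contract itself is removed. Then C̄ is a completion of C: for every offer set Y, either C̄(Y) = C(Y), or C̄(Y) contains two distinct contracts of the same agent. -/

import Mathlib

set_option linter.unusedSectionVars false
set_option linter.unusedVariables false

open Finset
variable {X I : Type*} [DecidableEq X] [Fintype X] [DecidableEq I]

/-- Select the `π`-maximal element of `Y ∪ {∅}` (higher value = higher priority). -/
noncomputable def pick (π : Option X → ℕ) (Y : Finset X) : Option X :=
  (((insert (none : Option X) (Y.image some)).toList).argmax π).join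

/-- The completed choice rule `C̄`: each slot is a priority order together with an
activation rule depending on the fill-history of earlier slots; an active slot
selects the priority-maximal remaining contract, and only the selected contract
itself is removed for later slots. -/
noncomputable def runBar :
    List ((Option X → ℕ) × (List Bool → Bool)) → List Bool → Finset X → Finset X
  | [], _, _ => ∅
  | (π, act) :: L, h, Y =>
    if act h then
      match pick π Y with
      | none => runBar L (h ++ [false]) Y
      | some x => insert x (runBar L (h ++ [true]) (Y.erase x))
    else runBar L (h ++ [false]) Y

/-- The SSPwCT choice rule `C`: as `runBar`, except that when a slot selects a
contract of agent `ag x`, all contracts of that agent are removed for later slots. -/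
noncomputable def runC (ag : X → I) :
    List ((Option X → ℕ) × (List Bool → Bool)) → List Bool → Finset X → Finset X
  | [], _, _ => ∅
  | (π, act) :: L, h, Y =>
    if act h then
      match pick π Y with
      | none => runC ag L (h ++ [false]) Y
      | some x => insert x (runC ag L (h ++ [true]) (Y.filter (fun y => ag y ≠ ag x)))
    else runC ag L (h ++ [false]) Y

lemma pick_spec (π : Option X → ℕ) (Y : Finset X) :
    ∃ m ∈ insert (none : Option X) (Y.image some),
      pick π Y = m ∧ ∀ a ∈ insert (none : Option X) (Y.image some), π a ≤ π m := by
  set l := (insert (none : Option X) (Y.image some)).toList with hl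
  have hne : l ≠ [] := by
    intro h
    have : (none : Option X) ∈ l := by
      rw [hl, Finset.mem_toList]; exact mem_insert_self _ _
    simp [h] at this
  obtain ⟨m, hm⟩ : ∃ m, l.argmax π = some m := by
    cases h : l.argmax π with
    | none => exact absurd (List.argmax_eq_none.mp h) hne
    | some m => exact ⟨m, rfl⟩
  refine ⟨m, ?_, ?_, ?_⟩
  · rw [← Finset.mem_toList]; exact List.argmax_mem hm
  · simp [pick, ← hl, hm]
  · intro a ha
    exact List.le_of_mem_argmax (by rwa [Finset.mem_toList]) hm

lemma pick_some_mem {π : Option X → ℕ} {Y : Finset X} {x : X}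
    (h : pick π Y = some x) : x ∈ Y := by
  obtain ⟨m, hmem, hpick, _⟩ := pick_spec π Y
  rw [hpick] at h
  subst h
  rcases Finset.mem_insert.mp hmem with h | h
  · exact absurd h (by simp)
  · simpa using h

lemma pick_le {π : Option X → ℕ} {Y : Finset X} {m : Option X}
    (h : pick π Y = m) : ∀ a ∈ insert (none : Option X) (Y.image some), π a ≤ π m := by
  obtain ⟨m', hmem, hpick, hle⟩ := pick_spec π Y
  rw [hpick] at h; subst h; exact hle

lemma pick_mem_insert {Y Z : Finset X} (hZY : Z ⊆ Y) (m : Option X)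
    (hm : m ∈ insert (none : Option X) (Z.image some)) :
    m ∈ insert (none : Option X) (Y.image some) := by
  rcases Finset.mem_insert.mp hm with h | h
  · simp [h]
  · obtain ⟨z, hz, rfl⟩ := Finset.mem_image.mp h
    exact Finset.mem_insert_of_mem (Finset.mem_image_of_mem _ (hZY hz))

lemma pick_none_subset {π : Option X → ℕ} (hinj : Function.Injective π)
    {Y Z : Finset X} (hZY : Z ⊆ Y) (h : pick π Y = none) : pick π Z = none := by
  obtain ⟨m, hmem, hpick, hle⟩ := pick_spec π Z
  have h1 : π m ≤ π (none : Option X) :=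
    pick_le h m (pick_mem_insert hZY m hmem)
  have h2 : π (none : Option X) ≤ π m := hle _ (mem_insert_self _ _)
  rw [hpick]
  exact hinj (le_antisymm h1 h2)

lemma pick_some_subset {π : Option X → ℕ} (hinj : Function.Injective π)
    {Y Z : Finset X} {x : X} (hZY : Z ⊆ Y) (h : pick π Y = some x) (hxZ : x ∈ Z) :
    pick π Z = some x := by
  obtain ⟨m, hmem, hpick, hle⟩ := pick_spec π Z
  have h1 : π m ≤ π (some x) :=
    pick_le h m (pick_mem_insert hZY m hmem)
  have h2 : π (some x) ≤ π m :=
    hle _ (Finset.mem_insert_of_mem (Finset.mem_image_of_mem _ hxZ))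
  rw [hpick]
  exact hinj (le_antisymm h1 h2)

lemma run_aux (ag : X → I) :
    ∀ (L : List ((Option X → ℕ) × (List Bool → Bool))),
      (∀ p ∈ L, Function.Injective p.1) →
      ∀ (h : List Bool) (Y Z A : Finset X), Z ⊆ Y →
        (∀ y ∈ Y, y ∉ Z → ∃ a ∈ A, a ∉ Y ∧ ag a = ag y) →
        runBar L h Y = runC ag L h Z ∨
          ∃ x ∈ A ∪ runBar L h Y, ∃ x' ∈ A ∪ runBar L h Y, x ≠ x' ∧ ag x = ag x' := by
  intro L
  induction L with
  | nil => intro _ h Y Z A _ _; left; simp [runBar, runC]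
  | cons p L ih =>
    obtain ⟨π, act⟩ := p
    intro hinj h Y Z A hZY hA
    have hinjπ : Function.Injective π := hinj _ List.mem_cons_self
    have hinj' : ∀ p ∈ L, Function.Injective p.1 :=
      fun p hp => hinj p (List.mem_cons_of_mem _ hp)
    by_cases hact : act h
    · cases hpY : pick π Y with
      | none =>
        have hpZ : pick π Z = none := pick_none_subset hinjπ hZY hpY
        have hBar : runBar ((π, act) :: L) h Y = runBar L (h ++ [false]) Y := by
          simp [runBar, hact, hpY]
        have hC : runC ag ((π, act) :: L) h Z = runC ag L (h ++ [false]) Z := by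
          simp [runC, hact, hpZ]
        rw [hBar, hC]
        exact ih hinj' (h ++ [false]) Y Z A hZY hA
      | some x =>
        have hxY : x ∈ Y := pick_some_mem hpY
        have hBar : runBar ((π, act) :: L) h Y
            = insert x (runBar L (h ++ [true]) (Y.erase x)) := by
          simp [runBar, hact, hpY]
        by_cases hxZ : x ∈ Z
        · have hpZ : pick π Z = some x := pick_some_subset hinjπ hZY hpY hxZ
          have hC : runC ag ((π, act) :: L) h Z
              = insert x (runC ag L (h ++ [true]) (Z.filter (fun y => ag y ≠ ag x))) := by
            simp [runC, hact, hpZ]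
          have hZY' : Z.filter (fun y => ag y ≠ ag x) ⊆ Y.erase x := by
            intro z hz
            rw [Finset.mem_filter] at hz
            refine Finset.mem_erase.mpr ⟨?_, hZY hz.1⟩
            intro h'; exact hz.2 (by rw [h'])
          have hA' : ∀ y ∈ Y.erase x, y ∉ Z.filter (fun y => ag y ≠ ag x) →
              ∃ a ∈ insert x A, a ∉ Y.erase x ∧ ag a = ag y := by
            intro y hy hyZ
            rw [Finset.mem_erase] at hy
            by_cases hyZ' : y ∈ Z
            · have : ag y = ag x := by
                by_contra hne
                exact hyZ (Finset.mem_filter.mpr ⟨hyZ', hne⟩)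
              exact ⟨x, mem_insert_self _ _, by simp, this.symm⟩
            · obtain ⟨a, haA, haY, hag⟩ := hA y hy.2 hyZ'
              exact ⟨a, Finset.mem_insert_of_mem haA,
                fun hc => haY (Finset.mem_of_mem_erase hc), hag⟩
          rcases ih hinj' (h ++ [true]) (Y.erase x)
              (Z.filter (fun y => ag y ≠ ag x)) (insert x A) hZY' hA' with heq | hbad
          · left; rw [hBar, hC, heq]
          · right
            obtain ⟨u, hu, v, hv, huv, hag⟩ := hbad
            have hset : insert x A ∪ runBar L (h ++ [true]) (Y.erase x)
                = A ∪ runBar ((π, act) :: L) h Y := by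
              rw [hBar, Finset.insert_union, Finset.union_insert]
            rw [hset] at hu hv
            exact ⟨u, hu, v, hv, huv, hag⟩
        · obtain ⟨a, haA, haY, hag⟩ := hA x hxY hxZ
          right
          refine ⟨x, ?_, a, Finset.mem_union_left _ haA, ?_, hag.symm⟩
          · rw [hBar]; exact Finset.mem_union_right _ (mem_insert_self _ _)
          · intro h'; exact haY (h' ▸ hxY)
    · have hBar : runBar ((π, act) :: L) h Y = runBar L (h ++ [false]) Y := by
        simp [runBar, hact]
      have hC : runC ag ((π, act) :: L) h Z = runC ag L (h ++ [false]) Z := by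
        simp [runC, hact]
      rw [hBar, hC]
      exact ih hinj' (h ++ [false]) Y Z A hZY hA

/-- `C̄` is a completion of `C`: for every offer set, either the two rules agree,
or `C̄` chooses two distinct contracts of the same agent. -/
theorem runBar_completion_of_runC (ag : X → I)
    (L : List ((Option X → ℕ) × (List Bool → Bool)))
    (hinj : ∀ p ∈ L, Function.Injective p.1) (Y : Finset X) :
    runBar L [] Y = runC ag L [] Y ∨
      ∃ x ∈ runBar L [] Y, ∃ x' ∈ runBar L [] Y, x ≠ x' ∧ ag x = ag x' := by
  rcases run_aux ag L hinj [] Y Y ∅ (le_refl Y) (by simp) with h | h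
  · exact Or.inl h
  · obtain ⟨x, hx, x', hx', hne, hag⟩ := h
    simp only [Finset.empty_union] at hx hx'
    exact Or.inr ⟨x, hx, x', hx', hne, hag⟩
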